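/- Let D be a cyclic code of length n and dimension n − k over F_q, and let D^⊥ be its dual with respect to the standard inner product (D^⊥ is a cyclic code of length n and dimension k). Then the number of distinct nonzero weights of D^⊥ is at least the covering radius of D. -/

import Mathlib

/-- The cyclic shift `ρ` on words of length `n`: `(ρ c) i = c (i - 1)`. -/
def cshift {F : Type*} {n : ℕ} (c : ZMod n → F) : ZMod n → F := fun i => c (i - 1)

/-- Hamming weight: the number of nonzero coordinates. -/
noncomputable def hwt {ι F : Type*} [Zero F] (c : ι → F) : ℕ := Set.ncard {i | c i ≠ 0}

/-- Hamming distance: the number of coordinates where two words differ. -/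
noncomputable def hdist {ι F : Type*} (x y : ι → F) : ℕ := Set.ncard {i | x i ≠ y i}

/-- The covering radius of a code `D ⊆ F^n`: the smallest `t` such that every word of
`F^n` is within Hamming distance `t` of some codeword of `D`. -/
noncomputable def covRadius {F : Type*} {n : ℕ} (D : Set (ZMod n → F)) : ℕ :=
  sInf {t : ℕ | ∀ x : ZMod n → F, ∃ c ∈ D, hdist x c ≤ t}

section AuxDelsarte
set_option maxHeartbeats 1000000
open Finset

private lemma sum_shift_eq_zero {V R : Type*} [AddCommGroup V] [Fintype V] [Field R]
    (g : V → R) (z : V) (r : R) (hr : r ≠ 1) (hshift : ∀ v, g (v + z) = r * g v) :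
    ∑ v, g v = 0 := by
  have h1 : ∑ v, g (v + z) = ∑ v, g v :=
    Fintype.sum_equiv (Equiv.addRight z) _ _ (fun v => rfl)
  have h2 : ∑ v, g v = r * ∑ v, g v := by
    rw [Finset.mul_sum, ← h1]
    exact Finset.sum_congr rfl fun v _ => hshift v
  have h3 : (1 - r) * ∑ v, g v = 0 := by rw [sub_mul, one_mul, ← h2, sub_self]
  exact (mul_eq_zero.mp h3).resolve_left (sub_ne_zero.mpr (Ne.symm hr))

private lemma sum_shift_finset_eq_zero {V R : Type*} [AddCommGroup V] [Field R]
    (s : Finset V) (g : V → R) (z : V) (hz : ∀ c ∈ s, c + z ∈ s) (hz' : ∀ c ∈ s, c - z ∈ s)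
    (r : R) (hr : r ≠ 1) (hshift : ∀ v, g (v + z) = r * g v) :
    ∑ v ∈ s, g v = 0 := by
  have h1 : ∑ v ∈ s, g (v + z) = ∑ v ∈ s, g v := by
    refine Finset.sum_bij' (fun a _ => a + z) (fun a _ => a - z) (fun a ha => hz a ha)
      (fun a ha => hz' a ha) (fun a _ => add_sub_cancel_right a z) (fun a _ => sub_add_cancel a z) (fun a _ => rfl)
  have h2 : ∑ v ∈ s, g v = r * ∑ v ∈ s, g v := by
    rw [Finset.mul_sum, ← h1]
    exact Finset.sum_congr rfl fun v _ => hshift v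
  have h3 : (1 - r) * ∑ v ∈ s, g v = 0 := by rw [sub_mul, one_mul, ← h2, sub_self]
  exact (mul_eq_zero.mp h3).resolve_left (sub_ne_zero.mpr (Ne.symm hr))

private lemma finset_exists_not_mem {α : Type*} {s t : Finset α} (h : t.card < s.card) :
    ∃ a ∈ s, a ∉ t := by
  by_contra hc
  push_neg at hc
  exact absurd (Finset.card_le_card hc) (not_le.mpr h)

private lemma hwt_cast_eq_sum {ι F R : Type*} [Fintype ι] [Zero F] [DecidableEq F]
    [Semiring R]
    (v : ι → F) : (hwt v : R) = ∑ i, (if v i ≠ 0 then (1 : R) else 0) := by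
  have h1 : {i | v i ≠ 0} = ↑(Finset.filter (fun i => v i ≠ 0) Finset.univ) := by
    ext i; simp
  rw [hwt, h1, Set.ncard_coe_finset, Finset.card_filter, Nat.cast_sum]
  exact Finset.sum_congr rfl fun i _ => by split <;> simp

private lemma key_sum {F R ι : Type*} [Field F] [Fintype F] [DecidableEq F] [Field R] [Fintype ι]
    [DecidableEq ι] (χ : AddChar F R) (hχ : ∀ b : F, b ≠ 0 → ∃ t : F, χ (b * t) ≠ 1)
    (u : ι → F) (d : ℕ) (hd : d < hwt u) :
    ∑ v : ι → F, (hwt v : R) ^ d * χ (∑ i, u i * v i) = 0 := by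
  classical
  have hexp : ∀ v : ι → F, (hwt v : R) ^ d =
      ∑ p ∈ Fintype.piFinset (fun _ : Fin d => (Finset.univ : Finset ι)),
        ∏ j, (if v (p j) ≠ 0 then (1 : R) else 0) := by
    intro v
    rw [hwt_cast_eq_sum (R := R) v, Finset.sum_pow']
  calc ∑ v : ι → F, (hwt v : R) ^ d * χ (∑ i, u i * v i)
      = ∑ p ∈ Fintype.piFinset (fun _ : Fin d => (Finset.univ : Finset ι)),
          ∑ v : ι → F, (∏ j, (if v (p j) ≠ 0 then (1 : R) else 0)) * χ (∑ i, u i * v i) := by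
        rw [Finset.sum_comm]
        exact Finset.sum_congr rfl fun v _ => by rw [hexp v, Finset.sum_mul]
    _ = 0 := by
        apply Finset.sum_eq_zero
        intro p _
        -- find a coordinate i0 with u i0 ≠ 0 and i0 not hit by p
        have hcard : (Finset.image p Finset.univ).card <
            (Finset.filter (fun i => u i ≠ 0) Finset.univ).card := by
          have h1 : (Finset.image p Finset.univ).card ≤ d :=
            le_trans Finset.card_image_le (by simp)
          have h2 : (Finset.filter (fun i => u i ≠ 0) Finset.univ).card = hwt u := by
            rw [hwt]
            have : {i | u i ≠ 0} = ↑(Finset.filter (fun i => u i ≠ 0) Finset.univ) := by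
              ext i; simp
            rw [this, Set.ncard_coe_finset]
          omega
        obtain ⟨i0, hi0mem, hi0not⟩ := finset_exists_not_mem hcard
        have hu0 : u i0 ≠ 0 := (Finset.mem_filter.mp hi0mem).2
        have hpj : ∀ j, p j ≠ i0 := fun j hj => hi0not (Finset.mem_image.mpr ⟨j, by simp, hj⟩)
        obtain ⟨t, ht⟩ := hχ (u i0) hu0
        set z : ι → F := Pi.single i0 t with hz
        refine sum_shift_eq_zero
          (fun v => (∏ j, (if v (p j) ≠ 0 then (1 : R) else 0)) * χ (∑ i, u i * v i))
          z (χ (u i0 * t)) ht ?_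
        intro v
        have hcoord : ∀ j, (v + z) (p j) = v (p j) := by
          intro j
          simp [hz, Pi.single_eq_of_ne (hpj j)]
        have hip : ∑ i, u i * (v + z) i = (∑ i, u i * v i) + u i0 * t := by
          have : ∀ i, u i * (v + z) i
              = u i * v i + (if i = i0 then u i0 * t else 0) := by
            intro i
            rcases eq_or_ne i i0 with rfl | h
            · simp [hz, mul_add]
            · simp [hz, Pi.single_eq_of_ne h, h]
          rw [Finset.sum_congr rfl fun i _ => this i, Finset.sum_add_distrib,
            Finset.sum_ite_eq' Finset.univ i0 (fun _ => u i0 * t)]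
          simp
        rw [hip, AddChar.map_add_eq_mul]
        have : ∀ j, (if (v + z) (p j) ≠ 0 then (1:R) else 0)
            = (if v (p j) ≠ 0 then (1:R) else 0) := fun j => by rw [hcoord j]
        rw [Finset.prod_congr rfl fun j _ => this j]
        ring

end AuxDelsarte

set_option maxHeartbeats 1000000 in
open Finset in
/-- If `D` is a cyclic code of length `n` and dimension `n - k` over `F_q`, then the
number of distinct nonzero weights of the dual code `D^⊥` is at least the covering
radius of `D`. -/
theorem stmt11 {F : Type*} [Field F] [Fintype F] {n k : ℕ} [NeZero n] (hkn : k ≤ n)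
    (D : Submodule F (ZMod n → F)) (hcyc : ∀ c ∈ D, cshift c ∈ D)
    (hdim : Module.finrank F D = n - k)
    (Ddual : Set (ZMod n → F))
    (hDdual : Ddual = {x : ZMod n → F | ∀ c ∈ D, ∑ i : ZMod n, x i * c i = 0}) :
    covRadius (D : Set (ZMod n → F)) ≤
      Set.ncard {w : ℕ | ∃ x ∈ Ddual, x ≠ 0 ∧ hwt x = w} := by
  classical
  set W : Set ℕ := {w : ℕ | ∃ x ∈ Ddual, x ≠ 0 ∧ hwt x = w} with hWdef
  have hWfin : W.Finite := by
    apply Set.Finite.subset (Set.finite_Iic n)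
    rintro w ⟨y, -, -, rfl⟩
    have h1 : hwt y ≤ (Finset.univ : Finset (ZMod n)).card := by
      rw [hwt]
      have h2 : {i | y i ≠ 0} = ↑(Finset.filter (fun i => y i ≠ 0) Finset.univ) := by
        ext i; simp
      rw [h2, Set.ncard_coe_finset]
      exact Finset.card_filter_le _ _
    simpa [ZMod.card] using h1
  set s := W.ncard with hsdef
  set Wf := hWfin.toFinset with hWf
  have hWfcard : Wf.card = s := by rw [hsdef, hWf]; exact (Set.ncard_eq_toFinset_card W hWfin).symm
  -- reduce to showing s is a covering radius bound
  rw [covRadius]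
  refine Nat.sInf_le ?_
  simp only [Set.mem_setOf_eq]
  intro x
  by_contra hcon
  push_neg at hcon
  -- additive character
  have hchar : ringChar ℂ ≠ ringChar F := by
    rw [ringChar.eq_zero]
    exact (CharP.char_ne_zero_of_finite (R := F) (ringChar F)).symm
  obtain ⟨m, χ, hprim⟩ := AddChar.FiniteField.primitiveChar F ℂ hchar
  haveI : CharZero (CyclotomicField m ℂ) :=
    charZero_of_injective_algebraMap (algebraMap ℂ _).injective
  have hχ : ∀ b : F, b ≠ 0 → ∃ t : F, χ (b * t) ≠ 1 := by
    intro b hb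
    obtain ⟨t, ht⟩ := AddChar.ne_one_iff.mp (hprim hb)
    exact ⟨t, by rwa [AddChar.mulShift_apply] at ht⟩
  -- code as finset
  have hCfin : (D : Set (ZMod n → F)).Finite := Set.toFinite _
  set Cf := hCfin.toFinset with hCf
  have hmemCf : ∀ c, c ∈ Cf ↔ c ∈ D := fun c => Set.Finite.mem_toFinset _
  -- annihilator function
  set A : (ZMod n → F) → CyclotomicField m ℂ :=
    fun v => ∏ w ∈ Wf, ((w : CyclotomicField m ℂ) - (hwt v : CyclotomicField m ℂ)) with hA
  -- Way 1
  have hway1 : (∑ v : ZMod n → F, A v * ∑ c ∈ Cf, χ (∑ i, (x + c) i * v i))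
      = A 0 * Cf.card := by
    have h0 : ∀ v : ZMod n → F, v ≠ 0 →
        A v * (∑ c ∈ Cf, χ (∑ i, (x + c) i * v i)) = 0 := by
      intro v hv
      by_cases hvd : v ∈ Ddual
      · have hwv : hwt v ∈ Wf := hWfin.mem_toFinset.mpr ⟨v, hvd, hv, rfl⟩
        have hAv : A v = 0 := Finset.prod_eq_zero hwv (sub_self _)
        rw [hAv, zero_mul]
      · have hsplit : ∀ c : ZMod n → F, χ (∑ i, (x + c) i * v i)
            = χ (∑ i, x i * v i) * χ (∑ i, c i * v i) := by
          intro c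
          rw [← AddChar.map_add_eq_mul, ← Finset.sum_add_distrib]
          congr 1
          exact Finset.sum_congr rfl fun i _ => by simp [add_mul]
        rw [hDdual] at hvd
        simp only [Set.mem_setOf_eq] at hvd
        push_neg at hvd
        obtain ⟨c0, hc0D, hb⟩ := hvd
        obtain ⟨t, ht⟩ := hχ _ hb
        have hzero : ∑ c ∈ Cf, χ (∑ i, c i * v i) = 0 := by
          refine sum_shift_finset_eq_zero Cf (fun c => χ (∑ i, c i * v i)) (t • c0)
            (fun c hc => (hmemCf _).mpr (D.add_mem ((hmemCf _).mp hc) (D.smul_mem t hc0D)))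
            (fun c hc => (hmemCf _).mpr (D.sub_mem ((hmemCf _).mp hc) (D.smul_mem t hc0D)))
            (χ ((∑ i, v i * c0 i) * t)) ht ?_
          intro c
          rw [← AddChar.map_add_eq_mul]
          congr 1
          have h3 : ∀ i, (c + t • c0) i * v i = v i * c0 i * t + c i * v i := by
            intro i
            simp only [Pi.add_apply, Pi.smul_apply, smul_eq_mul]
            ring
          rw [Finset.sum_congr rfl fun i _ => h3 i, Finset.sum_add_distrib,
            ← Finset.sum_mul]
        rw [Finset.sum_congr rfl fun c _ => hsplit c, ← Finset.mul_sum, hzero,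
          mul_zero, mul_zero]
    rw [Fintype.sum_eq_single (0 : ZMod n → F) h0]
    congr 1
    have h4 : ∀ c : ZMod n → F, χ (∑ i, (x + c) i * (0 : ZMod n → F) i) = 1 := by
      intro c
      simp [AddChar.map_zero_eq_one]
    rw [Finset.sum_congr rfl fun c _ => h4 c, Finset.sum_const, nsmul_eq_mul, mul_one]
  -- Way 2
  have hway2 : (∑ v : ZMod n → F, A v * ∑ c ∈ Cf, χ (∑ i, (x + c) i * v i)) = 0 := by
    have hswap : (∑ v : ZMod n → F, A v * ∑ c ∈ Cf, χ (∑ i, (x + c) i * v i))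
        = ∑ c ∈ Cf, ∑ v : ZMod n → F, A v * χ (∑ i, (x + c) i * v i) := by
      simp_rw [Finset.mul_sum]
      exact Finset.sum_comm
    rw [hswap]
    apply Finset.sum_eq_zero
    intro c hc
    have hu : s < hwt (x + c) := by
      have h1 := hcon (-c) (D.neg_mem ((hmemCf c).mp hc))
      have h2 : hdist x (-c) = hwt (x + c) := by
        rw [hdist, hwt]
        congr 1
        ext i
        simp only [Set.mem_setOf_eq, Pi.add_apply, Pi.neg_apply]
        rw [not_iff_not, eq_neg_iff_add_eq_zero]
      omega
    set P : Polynomial (CyclotomicField m ℂ) :=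
      ∏ w ∈ Wf, (Polynomial.C ((w : CyclotomicField m ℂ)) - Polynomial.X) with hP
    have hPdeg : P.natDegree < s + 1 := by
      have h5 : P.natDegree ≤ ∑ w ∈ Wf, (Polynomial.C ((w : CyclotomicField m ℂ))
          - Polynomial.X).natDegree := Polynomial.natDegree_prod_le _ _
      have h6 : ∑ w ∈ Wf, (Polynomial.C ((w : CyclotomicField m ℂ))
          - Polynomial.X).natDegree ≤ Wf.card * 1 := by
        apply Finset.sum_le_card_nsmul
        intro w _
        refine le_trans (Polynomial.natDegree_sub_le _ _) ?_
        simp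
      have h8 := hWfcard
      omega
    have hAeval : ∀ v : ZMod n → F,
        A v = ∑ d ∈ Finset.range (s + 1), P.coeff d * (hwt v : CyclotomicField m ℂ) ^ d := by
      intro v
      have h7 : A v = P.eval ((hwt v : CyclotomicField m ℂ)) := by
        rw [hP, Polynomial.eval_prod]
        exact Finset.prod_congr rfl fun w _ => by simp
      rw [h7, Polynomial.eval_eq_sum_range' hPdeg]
    calc ∑ v : ZMod n → F, A v * χ (∑ i, (x + c) i * v i)
        = ∑ d ∈ Finset.range (s + 1), P.coeff d *
            ∑ v : ZMod n → F, (hwt v : CyclotomicField m ℂ) ^ d * χ (∑ i, (x + c) i * v i) := by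
          simp_rw [hAeval, Finset.sum_mul, Finset.mul_sum]
          rw [Finset.sum_comm]
          exact Finset.sum_congr rfl fun d _ => Finset.sum_congr rfl fun v _ => by ring
      _ = 0 := by
          apply Finset.sum_eq_zero
          intro d hd
          rw [key_sum χ hχ (x + c) d
            (lt_of_le_of_lt (Nat.lt_succ_iff.mp (Finset.mem_range.mp hd)) hu), mul_zero]
  -- contradiction
  rw [hway2] at hway1
  have hA0 : A 0 ≠ 0 := by
    rw [hA]
    rw [Finset.prod_ne_zero_iff]
    intro w hw
    have hw0 : w ≠ 0 := by
      obtain ⟨y, _, hyne, hyw⟩ := hWfin.mem_toFinset.mp hw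
      subst hyw
      rw [hwt, Ne, Set.ncard_eq_zero (Set.toFinite _)]
      intro hemp
      apply hyne
      funext i
      by_contra hyi
      have hmem : i ∈ {j | y j ≠ 0} := by simpa using hyi
      rw [hemp] at hmem
      exact hmem
    have hwt0 : hwt (0 : ZMod n → F) = 0 := by
      rw [hwt]
      convert Set.ncard_empty (ZMod n)
      ext i; simp
    rw [hwt0]
    simpa using (Nat.cast_ne_zero.mpr hw0 : ((w : CyclotomicField m ℂ)) ≠ 0)
  have hcard0 : ((Cf.card : CyclotomicField m ℂ)) ≠ 0 := by
    refine Nat.cast_ne_zero.mpr (Finset.card_ne_zero_of_mem ((hmemCf 0).mpr D.zero_mem))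
  exact mul_ne_zero hA0 hcard0 hway1.symm
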